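/- For every instance (R,B,P) there exists a minimum red-blue-purple spanning graph in which every vertex has degree at most 15. -/

import Mathlib

open scoped Classical

noncomputable section

/-- The Euclidean plane. -/
abbrev Pt : Type := EuclideanSpace ℝ (Fin 2)

/-- The simple graph on the plane whose edge set is the finite set `E`. -/
def graphOf (E : Finset (Sym2 Pt)) : SimpleGraph Pt where
  Adj x y := x ≠ y ∧ s(x, y) ∈ E
  symm := ⟨fun x y ⟨hne, he⟩ => ⟨hne.symm, by rwa [Sym2.eq_swap]⟩⟩
  loopless := ⟨fun x ⟨hne, _⟩ => hne rfl⟩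

/-- Euclidean length of an edge. -/
def edgeLen (e : Sym2 Pt) : ℝ :=
  Sym2.lift ⟨fun x y => dist x y, fun _ _ => dist_comm _ _⟩ e

/-- Total Euclidean length of a finite edge set. -/
def weight (E : Finset (Sym2 Pt)) : ℝ := ∑ e ∈ E, edgeLen e

/-- `E` is the edge set of a red-blue-purple spanning graph of `(R, B, P)`. -/
def IsRBP (R B P : Finset Pt) (E : Finset (Sym2 Pt)) : Prop :=
  (∀ e ∈ E, ¬ e.IsDiag) ∧
  (∀ e ∈ E, ∀ x ∈ e, x ∈ R ∪ B ∪ P) ∧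
  ((graphOf E).induce (↑(R ∪ P) : Set Pt)).Connected ∧
  ((graphOf E).induce (↑(B ∪ P) : Set Pt)).Connected

/-- `E` is the edge set of a minimum red-blue-purple spanning graph of `(R, B, P)`. -/
def IsMinRBP (R B P : Finset Pt) (E : Finset (Sym2 Pt)) : Prop :=
  IsRBP R B P E ∧ ∀ E', IsRBP R B P E' → weight E ≤ weight E'

/- ------------------------------------------------------------------ -/
/- Auxiliary material -/

private lemma edgeLen_mk (x y : Pt) : edgeLen s(x, y) = dist x y := by
  simp [edgeLen]

/-- secondary (tie-breaking) weight of an edge : sum of first coordinates. -/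
private def sw : Sym2 Pt → ℝ :=
  Sym2.lift ⟨fun x y => x 0 + y 0, fun _ _ => add_comm _ _⟩

private lemma sw_mk (x y : Pt) : sw s(x, y) = x 0 + y 0 := by
  simp [sw]

/-- total secondary weight. -/
private def sweight (E : Finset (Sym2 Pt)) : ℝ := ∑ e ∈ E, sw e

private lemma expand_sq (z w : ℂ) :
    ‖z - w‖ ^ 2 = ‖z‖ ^ 2 + ‖w‖ ^ 2
      - 2 * (‖z‖ * ‖w‖ * Real.cos (z.arg - w.arg)) := by
  by_cases hz : z = 0
  · simp [hz]
  by_cases hw : w = 0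
  · simp [hw]
  have hz' : ‖z‖ ≠ 0 := by simpa using hz
  have hw' : ‖w‖ ≠ 0 := by simpa using hw
  have hre_z : z.re = ‖z‖ * Real.cos z.arg := by
    rw [Complex.cos_arg hz]; field_simp
  have him_z : z.im = ‖z‖ * Real.sin z.arg := by
    rw [Complex.sin_arg]; field_simp
  have hre_w : w.re = ‖w‖ * Real.cos w.arg := by
    rw [Complex.cos_arg hw]; field_simp
  have him_w : w.im = ‖w‖ * Real.sin w.arg := by
    rw [Complex.sin_arg]; field_simp
  have h1 : ‖z - w‖ ^ 2 = (z.re - w.re) ^ 2 + (z.im - w.im) ^ 2 := by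
    rw [Complex.sq_norm, Complex.normSq_apply,
      Complex.sub_re, Complex.sub_im]; ring
  have h2 : ‖z‖ ^ 2 = z.re ^ 2 + z.im ^ 2 := by
    rw [Complex.sq_norm, Complex.normSq_apply]; ring
  have h3 : ‖w‖ ^ 2 = w.re ^ 2 + w.im ^ 2 := by
    rw [Complex.sq_norm, Complex.normSq_apply]; ring
  have hcs := Real.cos_sq_add_sin_sq z.arg
  have hcs' := Real.cos_sq_add_sin_sq w.arg
  rw [h1, h2, h3, Real.cos_sub,
    hre_z, him_z, hre_w, him_w]
  ring

open Real in
/-- The hexagon rigidity lemma: six vectors that pairwise satisfy the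
"no shorter swap" inequality form a perfect hexagon, and one of them points
into the left half plane while being swappable at equal weight. -/
private lemma hex6 (w : Fin 6 → ℂ) (h0 : ∀ i, w i ≠ 0)
    (hge : ∀ i j, i ≠ j → max ‖w i‖ ‖w j‖ ≤ ‖w i - w j‖) :
    ∃ i j, i ≠ j ∧ ‖w i - w j‖ ≤ ‖w j‖ ∧ (w i).re < 0 := by
  set θ : Fin 6 → ℝ := fun i => (w i).arg with hθ
  set r : Fin 6 → ℝ := fun i => ‖w i‖ with hr
  have hrpos : ∀ i, 0 < r i := fun i => norm_pos_iff.mpr (h0 i)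
  have hge2 : ∀ i j, i ≠ j →
      (max (r i) (r j)) ^ 2 ≤ r i ^ 2 + r j ^ 2 - 2 * (r i * r j * Real.cos (θ i - θ j)) := by
    intro i j hij
    have h := hge i j hij
    have h2 : (max (r i) (r j)) ^ 2 ≤ ‖w i - w j‖ ^ 2 :=
      pow_le_pow_left₀ (le_max_of_le_left (hrpos i).le) h 2
    calc (max (r i) (r j)) ^ 2 ≤ ‖w i - w j‖ ^ 2 := h2
    _ = _ := expand_sq (w i) (w j)
  have key : ∀ i j, i ≠ j → Real.cos (θ i - θ j) ≤ 1 / 2 := by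
    intro i j hij
    have h := hge2 i j hij
    have hi := hrpos i; have hj := hrpos j
    rcases le_total (r i) (r j) with hle | hle
    · rw [max_eq_right hle] at h
      nlinarith [mul_pos hi hj, mul_le_mul_of_nonneg_left hle hi.le]
    · rw [max_eq_left hle] at h
      nlinarith [mul_pos hi hj, mul_le_mul_of_nonneg_left hle hj.le]
  have eqlen : ∀ i j, i ≠ j → Real.cos (θ i - θ j) = 1/2 → r i = r j := by
    intro i j hij hc
    have h := hge2 i j hij
    rw [hc] at h
    have hi := hrpos i; have hj := hrpos j
    rcases le_total (r i) (r j) with hle | hle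
    · rw [max_eq_right hle] at h
      have : r j ≤ r i := by nlinarith
      linarith
    · rw [max_eq_left hle] at h
      have : r i ≤ r j := by nlinarith
      linarith
  have disteq : ∀ i j, i ≠ j → Real.cos (θ i - θ j) = 1/2 → r i = r j →
      ‖w i - w j‖ = r j := by
    intro i j hij hc hrr
    have h := expand_sq (w i) (w j)
    rw [hc] at h
    have h' : ‖w i - w j‖ ^ 2 = r j ^ 2 := by
      have hri : ‖w i‖ = r j := by rw [← hrr]
      have hrj : ‖w j‖ = r j := rfl
      rw [h, hri, hrj]; ring
    exact (sq_eq_sq₀ (norm_nonneg _) (hrpos j).le).mp h'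
  have hre_f : ∀ i, (w i).re = r i * Real.cos (θ i) := by
    intro i
    have := Complex.cos_arg (h0 i)
    have hri : r i = ‖w i‖ := by rw [hr]
    have habs : ‖w i‖ ≠ 0 := by simpa using h0 i
    rw [hri, hθ, this]
    field_simp
  by_contra hcon
  push_neg at hcon
  set σ : Equiv.Perm (Fin 6) := Tuple.sort θ with hσ
  have hmono : Monotone (θ ∘ σ) := Tuple.monotone_sort θ
  set φ : Fin 6 → ℝ := θ ∘ σ with hφ
  have hne : ∀ k l : Fin 6, k ≠ l → σ k ≠ σ l := fun k l h e => h (σ.injective e)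
  have gap_lb : ∀ k l : Fin 6, k < l → π/3 ≤ φ l - φ k := by
    intro k l hkl
    have hd0 : 0 ≤ φ l - φ k := sub_nonneg.mpr (hmono hkl.le)
    have hc : Real.cos (φ l - φ k) ≤ 1/2 := by
      have := key (σ l) (σ k) (hne l k (ne_of_gt hkl))
      simpa [hφ] using this
    by_contra hlt
    push_neg at hlt
    have := Real.cos_lt_cos_of_nonneg_of_le_pi hd0 (by linarith [Real.pi_pos]) hlt
    rw [Real.cos_pi_div_three] at this
    linarith
  have hpi_ub : ∀ k, φ k ≤ π := fun k => Complex.arg_le_pi _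
  have hpi_lb : ∀ k, -π < φ k := fun k => Complex.neg_pi_lt_arg _
  have g01 := gap_lb 0 1 (by decide)
  have g12 := gap_lb 1 2 (by decide)
  have g23 := gap_lb 2 3 (by decide)
  have g34 := gap_lb 3 4 (by decide)
  have g45 := gap_lb 4 5 (by decide)
  have h05 : φ 5 - φ 0 ≤ 5 * π / 3 := by
    by_contra h
    push_neg at h
    have hub : φ 5 - φ 0 < 2 * π := by
      have h1 := hpi_ub 5; have h2 := hpi_lb 0; linarith
    have hc : Real.cos (φ 5 - φ 0) ≤ 1/2 := by
      have := key (σ 5) (σ 0) (hne 5 0 (by decide))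
      simpa [hφ] using this
    have heq := Real.cos_two_pi_sub (φ 5 - φ 0)
    have h2 : 1/2 < Real.cos (2*π - (φ 5 - φ 0)) := by
      have hx0 : 0 ≤ 2*π - (φ 5 - φ 0) := by linarith
      have := Real.cos_lt_cos_of_nonneg_of_le_pi hx0 (by linarith [Real.pi_pos])
        (by linarith : 2*π - (φ 5 - φ 0) < π/3)
      rw [Real.cos_pi_div_three] at this
      linarith
    rw [heq] at h2
    linarith
  have e01 : φ 1 - φ 0 = π/3 := by linarith
  have e12 : φ 2 - φ 1 = π/3 := by linarith
  have e23 : φ 3 - φ 2 = π/3 := by linarith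
  have e34 : φ 4 - φ 3 = π/3 := by linarith
  have e45 : φ 5 - φ 4 = π/3 := by linarith
  have ccons : ∀ k l : Fin 6, φ k - φ l = - (π/3) →
      Real.cos (θ (σ k) - θ (σ l)) = 1/2 := by
    intro k l he
    have : θ (σ k) - θ (σ l) = φ k - φ l := by simp [hφ]
    rw [this, he, Real.cos_neg, Real.cos_pi_div_three]
  have c01 := ccons 0 1 (by linarith)
  have c12 := ccons 1 2 (by linarith)
  have c34 := ccons 3 4 (by linarith)
  have c45 := ccons 4 5 (by linarith)
  have step : ∀ k l : Fin 6, k ≠ l → Real.cos (θ (σ k) - θ (σ l)) = 1/2 →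
      0 ≤ Real.cos (φ k) := by
    intro k l hkl hc
    have hrr := eqlen (σ k) (σ l) (hne k l hkl) hc
    have hd := disteq (σ k) (σ l) (hne k l hkl) hc hrr
    have hd' : ‖w (σ k) - w (σ l)‖ ≤ ‖w (σ l)‖ := le_of_eq hd
    have hge0 := hcon (σ k) (σ l) (hne k l hkl) hd'
    rw [hre_f (σ k)] at hge0
    by_contra hneg
    push_neg at hneg
    have : r (σ k) * Real.cos (θ (σ k)) < 0 :=
      mul_neg_of_pos_of_neg (hrpos (σ k)) (by simpa [hφ] using hneg)
    linarith
  have hc0 := step 0 1 (by decide) c01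
  have hc1 := step 1 2 (by decide) c12
  have hc3 := step 3 4 (by decide) c34
  have hc4 := step 4 5 (by decide) c45
  have hphi3 : φ 3 = φ 0 + π := by linarith
  have hphi4 : φ 4 = φ 1 + π := by linarith
  have hcos3 : Real.cos (φ 3) = - Real.cos (φ 0) := by
    rw [hphi3]; simp [Real.cos_add]
  have hcos4 : Real.cos (φ 4) = - Real.cos (φ 1) := by
    rw [hphi4]; simp [Real.cos_add]
  have hz0 : Real.cos (φ 0) = 0 := by rw [hcos3] at hc3; linarith
  have hz1 : Real.cos (φ 1) = 0 := by rw [hcos4] at hc4; linarith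
  have hphi1 : φ 1 = φ 0 + π/3 := by linarith
  have hexp : Real.cos (φ 1) =
      Real.cos (φ 0) * (1/2) - Real.sin (φ 0) * (Real.sqrt 3 / 2) := by
    rw [hphi1, Real.cos_add, Real.cos_pi_div_three, Real.sin_pi_div_three]
  have hs3 : (0:ℝ) < Real.sqrt 3 := Real.sqrt_pos.mpr (by norm_num)
  have hsin0 : Real.sin (φ 0) = 0 := by
    rw [hz1, hz0] at hexp
    have h : Real.sin (φ 0) * (Real.sqrt 3 / 2) = 0 := by linarith
    rcases mul_eq_zero.mp h with h' | h'
    · exact h'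
    · exfalso; linarith
  have := Real.cos_sq_add_sin_sq (φ 0)
  rw [hz0, hsin0] at this
  norm_num at this

private lemma conn_aux {E F : Finset (Sym2 Pt)} {T : Set Pt} {u y y' : Pt}
    (hsub : ∀ e ∈ E, e ≠ s(u,y') → e ∈ F)
    (h1 : s(u,y) ∈ F) (h2 : s(y,y') ∈ F)
    (huy : u ≠ y) (hyy' : y ≠ y')
    (hyT : u ∈ T → y' ∈ T → y ∈ T)
    (hc : ((graphOf E).induce T).Connected) :
    ((graphOf F).induce T).Connected := by
  have mkAdj : ∀ (p q : T), (p:Pt) ≠ (q:Pt) → s((p:Pt), (q:Pt)) ∈ F →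
      ((graphOf F).induce T).Adj p q := fun p q h h' => (show (p:Pt) ≠ q ∧ s((p:Pt), (q:Pt)) ∈ F from ⟨h, h'⟩)
  have hadj : ∀ a b : T, ((graphOf E).induce T).Adj a b →
      ((graphOf F).induce T).Reachable a b := by
    intro a b hab
    obtain ⟨hne, he⟩ := (hab : (a:Pt) ≠ b ∧ s((a:Pt), (b:Pt)) ∈ E)
    by_cases hcase : s((a:Pt), (b:Pt)) = s(u, y')
    · rw [Sym2.eq_iff] at hcase
      have hmemy : y ∈ T := by
        rcases hcase with ⟨ha, hb⟩ | ⟨ha, hb⟩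
        · exact hyT (ha ▸ a.2) (hb ▸ b.2)
        · exact hyT (hb ▸ b.2) (ha ▸ a.2)
      set c : T := ⟨y, hmemy⟩ with hcdef
      have hcy : (c : Pt) = y := rfl
      rcases hcase with ⟨ha, hb⟩ | ⟨ha, hb⟩
      · have r1 := mkAdj a c (by rw [ha, hcy]; exact huy) (by rw [ha, hcy]; exact h1)
        have r2 := mkAdj c b (by rw [hb, hcy]; exact hyy') (by rw [hb, hcy]; exact h2)
        exact r1.reachable.trans r2.reachable
      · have r1 := mkAdj a c (by rw [ha, hcy]; exact hyy'.symm)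
          (by rw [ha, hcy, Sym2.eq_swap]; exact h2)
        have r2 := mkAdj c b (by rw [hb, hcy]; exact huy.symm)
          (by rw [hb, hcy, Sym2.eq_swap]; exact h1)
        exact r1.reachable.trans r2.reachable
    · exact SimpleGraph.Adj.reachable
        (show (a:Pt) ≠ b ∧ s((a:Pt), (b:Pt)) ∈ F from ⟨hne, hsub _ he hcase⟩)
  haveI : Nonempty T := hc.nonempty
  constructor
  intro a b
  obtain ⟨wlk⟩ := hc.preconnected a b
  induction wlk with
  | nil => exact SimpleGraph.Reachable.refl _
  | cons h p ih => exact (hadj _ _ h).trans ih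

/-- swapping lemma : replacing the edge `u y'` by the edge `y y'` (with `y`, `y'`
in the same colour class) preserves the RBP property. -/
private lemma isRBP_swap (R B P : Finset Pt)
    (hRB : Disjoint R B) (hRP : Disjoint R P) (hBP : Disjoint B P)
    {E F : Finset (Sym2 Pt)} (hE : IsRBP R B P E) {u y y' : Pt}
    (hK : (y ∈ R ∧ y' ∈ R) ∨ (y ∈ B ∧ y' ∈ B) ∨ (y ∈ P ∧ y' ∈ P))
    (hyy' : y ≠ y') (huy : s(u,y) ∈ E)
    (hF1 : s(u,y) ∈ F) (hF2 : s(y,y') ∈ F)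
    (hFsub : ∀ e ∈ E, e ≠ s(u,y') → e ∈ F)
    (hFsup : ∀ e ∈ F, e ∈ E ∨ e = s(y,y')) :
    IsRBP R B P F := by
  obtain ⟨hdiag, hpts, hc1, hc2⟩ := hE
  have huy_ne : u ≠ y := by
    intro h
    exact hdiag _ huy (by rw [h]; exact Sym2.mk_isDiag_iff.mpr rfl)
  have hyS : y ∈ R ∪ B ∪ P := by
    simp only [Finset.mem_union]
    rcases hK with ⟨h, _⟩ | ⟨h, _⟩ | ⟨h, _⟩ <;> tauto
  have hy'S : y' ∈ R ∪ B ∪ P := by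
    simp only [Finset.mem_union]
    rcases hK with ⟨_, h⟩ | ⟨_, h⟩ | ⟨_, h⟩ <;> tauto
  refine ⟨?_, ?_, ?_, ?_⟩
  · intro e he
    rcases hFsup e he with h | rfl
    · exact hdiag e h
    · rw [Sym2.mk_isDiag_iff]; exact hyy'
  · intro e he z hz
    rcases hFsup e he with h | rfl
    · exact hpts e h z hz
    · rcases Sym2.mem_iff.mp hz with rfl | rfl
      · exact hyS
      · exact hy'S
  · refine conn_aux hFsub hF1 hF2 huy_ne hyy' ?_ hc1
    intro _ hy'T
    rcases hK with ⟨h1, _⟩ | ⟨_, h2⟩ | ⟨h1, _⟩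
    · simp only [Finset.coe_union, Set.mem_union, Finset.mem_coe]; left; exact h1
    · exfalso
      have : y' ∈ R ∪ P := by
        simpa only [Finset.coe_union, Set.mem_union, Finset.mem_coe, Finset.mem_union] using hy'T
      rcases Finset.mem_union.mp this with h | h
      · exact (Finset.disjoint_left.mp hRB h) h2
      · exact (Finset.disjoint_left.mp hBP h2) h
    · simp only [Finset.coe_union, Set.mem_union, Finset.mem_coe]; right; exact h1
  · refine conn_aux hFsub hF1 hF2 huy_ne hyy' ?_ hc2
    intro _ hy'T
    rcases hK with ⟨_, h2⟩ | ⟨h1, _⟩ | ⟨h1, _⟩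
    · exfalso
      have : y' ∈ B ∪ P := by
        simpa only [Finset.coe_union, Set.mem_union, Finset.mem_coe, Finset.mem_union] using hy'T
      rcases Finset.mem_union.mp this with h | h
      · exact (Finset.disjoint_left.mp hRB h2) h
      · exact (Finset.disjoint_left.mp hRP h2) h
    · simp only [Finset.coe_union, Set.mem_union, Finset.mem_coe]; left; exact h1
    · simp only [Finset.coe_union, Set.mem_union, Finset.mem_coe]; right; exact h1

/-- for every instance `(R, B, P)` (admitting an RBP spanning graph)
there exists a minimum red-blue-purple spanning graph in which every vertex has
degree at most 15. -/
theorem exists_minRBP_max_degree_15 (R B P : Finset Pt)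
    (hRB : Disjoint R B) (hRP : Disjoint R P) (hBP : Disjoint B P)
    (hex : ∃ E₀ : Finset (Sym2 Pt), IsRBP R B P E₀) :
    ∃ E : Finset (Sym2 Pt), IsMinRBP R B P E ∧
      ∀ x : Pt, (E.filter (fun e => x ∈ e)).card ≤ 15 := by
  obtain ⟨E₀, hE₀⟩ := hex
  set S : Finset Pt := R ∪ B ∪ P with hS
  set U : Finset (Sym2 Pt) := (S ×ˢ S).image (fun p => s(p.1, p.2)) with hU
  have subU : ∀ {E' : Finset (Sym2 Pt)}, IsRBP R B P E' → E' ⊆ U := by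
    intro E' hE' e
    induction e using Sym2.ind with
    | _ a b =>
      intro he
      have ha : a ∈ S := hE'.2.1 _ he a (Sym2.mem_mk_left _ _)
      have hb : b ∈ S := hE'.2.1 _ he b (Sym2.mem_mk_right _ _)
      exact Finset.mem_image.mpr ⟨(a, b), Finset.mem_product.mpr ⟨ha, hb⟩, rfl⟩
  set C : Finset (Finset (Sym2 Pt)) := U.powerset.filter (fun E' => IsRBP R B P E') with hC
  have hE₀C : E₀ ∈ C := Finset.mem_filter.mpr ⟨Finset.mem_powerset.mpr (subU hE₀), hE₀⟩
  obtain ⟨E₁, hE₁C, hmin1⟩ := Finset.exists_min_image C weight ⟨E₀, hE₀C⟩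
  set C' : Finset (Finset (Sym2 Pt)) := C.filter (fun E' => weight E' ≤ weight E₁) with hC'
  obtain ⟨E, hEC', hmin2'⟩ := Finset.exists_min_image C' sweight
    ⟨E₁, Finset.mem_filter.mpr ⟨hE₁C, le_refl _⟩⟩
  have hEC : E ∈ C := (Finset.mem_filter.mp hEC').1
  have hErbp : IsRBP R B P E := (Finset.mem_filter.mp hEC).2
  have hwE1 : weight E = weight E₁ :=
    le_antisymm (Finset.mem_filter.mp hEC').2 (hmin1 E hEC)
  have hminw : ∀ E', IsRBP R B P E' → weight E ≤ weight E' := by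
    intro E' h
    rw [hwE1]
    exact hmin1 E' (Finset.mem_filter.mpr ⟨Finset.mem_powerset.mpr (subU h), h⟩)
  have hmins : ∀ E', IsRBP R B P E' → weight E' ≤ weight E → sweight E ≤ sweight E' := by
    intro E' h hw
    refine hmin2' E' (Finset.mem_filter.mpr ⟨Finset.mem_filter.mpr
      ⟨Finset.mem_powerset.mpr (subU h), h⟩, ?_⟩)
    rw [← hwE1]; exact hw
  refine ⟨E, ⟨hErbp, hminw⟩, ?_⟩
  intro x
  have hxadj : ∀ {z : Pt}, s(x, z) ∈ E → x ≠ z := by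
    intro z hz
    have := hErbp.1 _ hz
    rwa [Sym2.mk_isDiag_iff] at this
  -- the combined swap / tie-break engine
  have swap2 : ∀ y y' : Pt,
      ((y ∈ R ∧ y' ∈ R) ∨ (y ∈ B ∧ y' ∈ B) ∨ (y ∈ P ∧ y' ∈ P)) → y ≠ y' →
      s(x, y) ∈ E → s(x, y') ∈ E →
      (dist y y' < dist x y' → False) ∧
      (dist y y' ≤ dist x y' → y 0 < x 0 → False) := by
    intro y y' hK hne hy hy'
    have hxy : x ≠ y := hxadj hy
    have hxy' : x ≠ y' := hxadj hy'
    have hdpos : (0:ℝ) < dist x y' := dist_pos.mpr hxy'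
    have hedge_ne : s(x, y) ≠ s(x, y') := by
      intro h
      rcases Sym2.eq_iff.mp h with ⟨_, h2⟩ | ⟨h1, h2⟩
      · exact hne h2
      · exact hxy' h1
    by_cases hmem : s(y, y') ∈ E
    · have hF : IsRBP R B P (E.erase s(x, y')) := by
        refine isRBP_swap R B P hRB hRP hBP hErbp hK hne hy ?_ ?_ ?_ ?_
        · exact Finset.mem_erase.mpr ⟨hedge_ne, hy⟩
        · refine Finset.mem_erase.mpr ⟨?_, hmem⟩
          intro h
          rcases Sym2.eq_iff.mp h with ⟨h1, _⟩ | ⟨_, h2⟩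
          · exact hxy h1.symm
          · exact hxy' h2.symm
        · intro e he hne'; exact Finset.mem_erase.mpr ⟨hne', he⟩
        · intro e he'; exact Or.inl (Finset.mem_of_mem_erase he')
      have hw : weight (E.erase s(x, y')) = weight E - edgeLen s(x, y') :=
        Finset.sum_erase_eq_sub hy'
      have hml := hminw _ hF
      rw [hw, edgeLen_mk] at hml
      exact ⟨fun _ => by linarith, fun _ _ => by linarith⟩
    · set E' : Finset (Sym2 Pt) := insert s(y, y') (E.erase s(x, y')) with hE'
      have hnotmem : s(y, y') ∉ E.erase s(x, y') :=
        fun h => hmem (Finset.mem_of_mem_erase h)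
      have hF : IsRBP R B P E' := by
        refine isRBP_swap R B P hRB hRP hBP hErbp hK hne hy ?_ ?_ ?_ ?_
        · exact Finset.mem_insert_of_mem (Finset.mem_erase.mpr ⟨hedge_ne, hy⟩)
        · exact Finset.mem_insert_self _ _
        · intro e he hne'; exact Finset.mem_insert_of_mem (Finset.mem_erase.mpr ⟨hne', he⟩)
        · intro e he'
          rcases Finset.mem_insert.mp he' with h | h
          · exact Or.inr h
          · exact Or.inl (Finset.mem_of_mem_erase h)
      have hwe : weight E' = weight E - dist x y' + dist y y' := by
        rw [hE']
        simp only [weight]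
        rw [Finset.sum_insert hnotmem, Finset.sum_erase_eq_sub hy', edgeLen_mk, edgeLen_mk]
        ring
      have hml := hminw _ hF
      refine ⟨fun hlt => ?_, fun hle h0 => ?_⟩
      · rw [hwe] at hml; linarith
      · have hwle : weight E' ≤ weight E := by rw [hwe]; linarith
        have hs := hmins _ hF hwle
        have hsw : sweight E' = sweight E - (x 0 + y' 0) + (y 0 + y' 0) := by
          rw [hE']
          simp only [sweight]
          rw [Finset.sum_insert hnotmem, Finset.sum_erase_eq_sub hy', sw_mk, sw_mk]
          ring
        rw [hsw] at hs; linarith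
  -- the neighbour set of x
  set N : Finset Pt := S.filter (fun z => z ≠ x ∧ s(x, z) ∈ E) with hN
  have hcardN : (E.filter (fun e => x ∈ e)).card = N.card := by
    symm
    refine Finset.card_bij (fun z _ => s(x, z)) ?_ ?_ ?_
    · intro z hz
      obtain ⟨_, _, hze⟩ := Finset.mem_filter.mp hz
      exact Finset.mem_filter.mpr ⟨hze, Sym2.mem_mk_left _ _⟩
    · intro z1 h1 z2 h2 heq
      rcases Sym2.eq_iff.mp heq with ⟨_, h⟩ | ⟨hx2, hx1⟩
      · exact h
      · exfalso
        exact (Finset.mem_filter.mp h1).2.1 hx1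
    · intro e hee
      obtain ⟨heE, hxe⟩ := Finset.mem_filter.mp hee
      revert heE hxe
      induction e using Sym2.ind with
      | _ a b =>
        intro heE hxe
        have hnd := hErbp.1 _ heE
        rw [Sym2.mk_isDiag_iff] at hnd
        rcases Sym2.mem_iff.mp hxe with h | h
        · refine ⟨b, Finset.mem_filter.mpr ⟨hErbp.2.1 _ heE b (Sym2.mem_mk_right _ _),
            fun hb => hnd (by rw [← h, hb]), ?_⟩, ?_⟩
          · rw [h]; exact heE
          · show s(x, b) = s(a, b)
            rw [h]
        · refine ⟨a, Finset.mem_filter.mpr ⟨hErbp.2.1 _ heE a (Sym2.mem_mk_left _ _),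
            fun ha => hnd (by rw [← h, ha]), ?_⟩, ?_⟩
          · rw [h, Sym2.eq_swap]; exact heE
          · show s(x, a) = s(a, b)
            rw [h, Sym2.eq_swap]
    -- the per-class degree bound
  have class5 : ∀ K : Finset Pt, (K = R ∨ K = B ∨ K = P) → (N.filter (· ∈ K)).card ≤ 5 := by
    intro K hKid
    by_contra hgt
    push_neg at hgt
    obtain ⟨t, hts, htc⟩ := Finset.exists_subset_card_eq (show 6 ≤ (N.filter (· ∈ K)).card from hgt)
    set eq6 := Finset.equivFinOfCardEq htc with heq6
    set b : Fin 6 → Pt := fun i => ((eq6.symm i : { z // z ∈ t }) : Pt) with hb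
    have hbt : ∀ i, b i ∈ t := fun i => (eq6.symm i).2
    have hbinj : Function.Injective b := fun i j h =>
      eq6.symm.injective (Subtype.ext h)
    have hbN : ∀ i, b i ∈ N := fun i => (Finset.mem_filter.mp (hts (hbt i))).1
    have hbK : ∀ i, b i ∈ K := fun i => (Finset.mem_filter.mp (hts (hbt i))).2
    have hbx : ∀ i, b i ≠ x := fun i => ((Finset.mem_filter.mp (hbN i)).2).1
    have hbe : ∀ i, s(x, b i) ∈ E := fun i => ((Finset.mem_filter.mp (hbN i)).2).2
    have hKcase : ∀ i j,
        (b i ∈ R ∧ b j ∈ R) ∨ (b i ∈ B ∧ b j ∈ B) ∨ (b i ∈ P ∧ b j ∈ P) := by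
      intro i j
      rcases hKid with rfl | rfl | rfl
      · exact Or.inl ⟨hbK i, hbK j⟩
      · exact Or.inr (Or.inl ⟨hbK i, hbK j⟩)
      · exact Or.inr (Or.inr ⟨hbK i, hbK j⟩)
    set c : Pt → ℂ := fun p => ⟨p 0, p 1⟩ with hc
    have cdist : ∀ p q : Pt, dist (c p) (c q) = dist p q := by
      intro p q
      rw [Complex.dist_eq_re_im, EuclideanSpace.dist_eq]
      simp [Fin.sum_univ_two, Real.dist_eq, sq_abs, hc]
    have cinj : Function.Injective c := by
      intro p q h
      have h0 : p 0 = q 0 := congrArg Complex.re h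
      have h1 : p 1 = q 1 := congrArg Complex.im h
      ext i
      fin_cases i <;> assumption
    set w : Fin 6 → ℂ := fun i => c (b i) - c x with hw
    have hnorm : ∀ i, ‖w i‖ = dist (b i) x := by
      intro i
      rw [hw, ← dist_eq_norm, cdist]
    have hnorm2 : ∀ i j, ‖w i - w j‖ = dist (b i) (b j) := by
      intro i j
      rw [hw]
      have h : c (b i) - c x - (c (b j) - c x) = c (b i) - c (b j) := by ring
      rw [h, ← dist_eq_norm, cdist]
    have h0 : ∀ i, w i ≠ 0 := fun i =>
      sub_ne_zero.mpr (fun h => hbx i (cinj h))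
    have hge : ∀ i j, i ≠ j → max ‖w i‖ ‖w j‖ ≤ ‖w i - w j‖ := by
      intro i j hij
      by_contra hlt
      push_neg at hlt
      rw [hnorm, hnorm, hnorm2] at hlt
      have hbne : b i ≠ b j := fun h => hij (hbinj h)
      rcases le_total (dist (b i) x) (dist (b j) x) with hle | hle
      · rw [max_eq_right hle] at hlt
        refine (swap2 (b i) (b j) (hKcase i j) hbne (hbe i) (hbe j)).1 ?_
        rwa [dist_comm x (b j)]
      · rw [max_eq_left hle] at hlt
        refine (swap2 (b j) (b i) (hKcase j i) hbne.symm (hbe j) (hbe i)).1 ?_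
        rwa [dist_comm x (b i), dist_comm (b j) (b i)]
    obtain ⟨i, j, hij, hle, hre⟩ := hex6 w h0 hge
    rw [hnorm2 i j, hnorm j] at hle
    have hre' : (b i) 0 < x 0 := by
      have hid : (w i).re = (b i) 0 - x 0 := rfl
      rw [hid] at hre
      linarith
    exact (swap2 (b i) (b j) (hKcase i j) (fun h => hij (hbinj h)) (hbe i) (hbe j)).2
      (by rwa [dist_comm (b j) x] at hle) hre'
  -- assemble the three classes
  have hsub3 : N ⊆ (N.filter (· ∈ R)) ∪ ((N.filter (· ∈ B)) ∪ (N.filter (· ∈ P))) := by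
    intro z hz
    have hzS : z ∈ S := (Finset.mem_filter.mp hz).1
    rw [hS] at hzS
    simp only [Finset.mem_union] at hzS ⊢
    rcases hzS with (h | h) | h
    · exact Or.inl (Finset.mem_filter.mpr ⟨hz, h⟩)
    · exact Or.inr (Or.inl (Finset.mem_filter.mpr ⟨hz, h⟩))
    · exact Or.inr (Or.inr (Finset.mem_filter.mpr ⟨hz, h⟩))
  have hcard3 : N.card ≤ (N.filter (· ∈ R)).card + ((N.filter (· ∈ B)).card + (N.filter (· ∈ P)).card) := by
    calc N.card ≤ ((N.filter (· ∈ R)) ∪ ((N.filter (· ∈ B)) ∪ (N.filter (· ∈ P)))).card :=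
        Finset.card_le_card hsub3
    _ ≤ (N.filter (· ∈ R)).card + ((N.filter (· ∈ B)) ∪ (N.filter (· ∈ P))).card :=
        Finset.card_union_le _ _
    _ ≤ _ := by
        have := Finset.card_union_le (N.filter (· ∈ B)) (N.filter (· ∈ P))
        omega
  have hRc := class5 R (Or.inl rfl)
  have hBc := class5 B (Or.inr (Or.inl rfl))
  have hPc := class5 P (Or.inr (Or.inr rfl))
  rw [hcardN]
  omega
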